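/- For fixed ρ > 0, the Erlang blocking probability B(m, ρ) = (ρ^m/m!)/(Σ_{i=0}^m ρ^i/i!) is strictly decreasing in m: B(m+1, ρ) < B(m, ρ) for all m ≥ 0. -/

import Mathlib

/-- For fixed ρ > 0, the Erlang blocking probability is strictly decreasing in m. -/
theorem erlangB_strict_anti (ρ : ℝ) (hρ : 0 < ρ)
    (B : ℕ → ℝ)
    (hB : ∀ n, B n = (ρ ^ n / (Nat.factorial n : ℝ)) /
      ∑ i ∈ Finset.range (n + 1), ρ ^ i / (Nat.factorial i : ℝ)) :
    ∀ m : ℕ, B (m + 1) < B m := by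
  intro m
  have ht : ∀ i : ℕ, 0 < ρ ^ i / (Nat.factorial i : ℝ) := fun i =>
    div_pos (pow_pos hρ i) (by exact_mod_cast Nat.factorial_pos i)
  have hS : ∀ n : ℕ, 0 < ∑ i ∈ Finset.range (n + 1), ρ ^ i / (Nat.factorial i : ℝ) :=
    fun n => Finset.sum_pos (fun i _ => ht i) (by simp)
  rw [hB, hB, div_lt_div_iff₀ (hS _) (hS _)]
  rw [Finset.mul_sum, Finset.mul_sum]
  rw [Finset.sum_range_succ' (fun i => ρ ^ m / (Nat.factorial m : ℝ) * (ρ ^ i / (Nat.factorial i : ℝ)))]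
  have hterm : ∀ i ∈ Finset.range (m + 1),
      ρ ^ (m + 1) / (Nat.factorial (m + 1) : ℝ) * (ρ ^ i / (Nat.factorial i : ℝ)) ≤
      ρ ^ m / (Nat.factorial m : ℝ) * (ρ ^ (i + 1) / (Nat.factorial (i + 1) : ℝ)) := by
    intro i hi
    rw [Finset.mem_range] at hi
    rw [div_mul_div_comm, div_mul_div_comm, ← pow_add, ← pow_add]
    have hpow : m + 1 + i = m + (i + 1) := by ring
    rw [hpow]
    apply div_le_div_of_nonneg_left (le_of_lt (pow_pos hρ _))
    · positivity
    · have : (Nat.factorial m : ℝ) * (Nat.factorial (i + 1) : ℝ) ≤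
          (Nat.factorial (m + 1) : ℝ) * (Nat.factorial i : ℝ) := by
        rw [Nat.factorial_succ, Nat.factorial_succ]
        push_cast
        have h1 : (0 : ℝ) ≤ (Nat.factorial m : ℝ) * (Nat.factorial i : ℝ) := by positivity
        have h2 : (i : ℝ) + 1 ≤ (m : ℝ) + 1 := by
          have : i ≤ m := Nat.lt_succ_iff.mp hi
          exact_mod_cast Nat.succ_le_succ this
        nlinarith
      exact this
  calc ∑ i ∈ Finset.range (m + 1),
        ρ ^ (m + 1) / (Nat.factorial (m + 1) : ℝ) * (ρ ^ i / (Nat.factorial i : ℝ))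
      ≤ ∑ i ∈ Finset.range (m + 1),
        ρ ^ m / (Nat.factorial m : ℝ) * (ρ ^ (i + 1) / (Nat.factorial (i + 1) : ℝ)) :=
        Finset.sum_le_sum hterm
    _ < ∑ i ∈ Finset.range (m + 1),
        ρ ^ m / (Nat.factorial m : ℝ) * (ρ ^ (i + 1) / (Nat.factorial (i + 1) : ℝ)) +
        ρ ^ m / (Nat.factorial m : ℝ) * (ρ ^ 0 / (Nat.factorial 0 : ℝ)) := by
        have := mul_pos (ht m) (ht 0)
        linarith
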